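/- Let H be a real Hilbert space and A : H → H bounded self-adjoint positive semidefinite. Define the iteration u^{n+1} = A u^n / ‖A u^n‖ (assuming Au^n ≠ 0 for all n) starting from ‖u⁰‖ = 1. Then the energy E(u) = −⟨Au, u⟩ is nonincreasing along the iteration: E(u^{n+1}) ≤ E(u^n) for all n. -/
import Mathlib


open RealInnerProductSpace

lemma psd_cauchy_schwarz {H : Type*} [NormedAddCommGroup H] [InnerProductSpace ℝ H]
    (A : H →L[ℝ] H) (hsa : ∀ x y : H, ⟪A x, y⟫ = ⟪x, A y⟫)
    (hpsd : ∀ x : H, 0 ≤ ⟪A x, x⟫) (x y : H) :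
    ⟪A x, y⟫ ^ 2 ≤ ⟪A x, x⟫ * ⟪A y, y⟫ := by
  have h : ∀ t : ℝ, 0 ≤ ⟪A y, y⟫ * (t * t) + (2 * ⟪A x, y⟫) * t + ⟪A x, x⟫ := by
    intro t
    have h1 := hpsd (t • y + x)
    have hsym : ⟪A y, x⟫ = ⟪A x, y⟫ := by
      rw [hsa y x, real_inner_comm]
    rw [map_add, map_smul, inner_add_left, inner_add_right, inner_add_right,
      real_inner_smul_left, real_inner_smul_left, real_inner_smul_right,
      real_inner_smul_right, hsym] at h1
    nlinarith [h1]
  have hd := discrim_le_zero h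
  rw [discrim] at hd
  nlinarith [hd]

theorem stmt8 {H : Type*} [NormedAddCommGroup H] [InnerProductSpace ℝ H]
    (A : H →L[ℝ] H) (hsa : ∀ x y : H, ⟪A x, y⟫ = ⟪x, A y⟫)
    (hpsd : ∀ x : H, 0 ≤ ⟪A x, x⟫)
    (u : ℕ → H) (hu0 : ‖u 0‖ = 1)
    (hnz : ∀ n, A (u n) ≠ 0)
    (hrec : ∀ n, u (n + 1) = ‖A (u n)‖⁻¹ • A (u n)) :
    ∀ n, -⟪A (u (n + 1)), u (n + 1)⟫ ≤ -⟪A (u n), u n⟫ := by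
  have hnorm : ∀ n, ‖u n‖ = 1 := by
    intro n
    induction n with
    | zero => exact hu0
    | succ k _ =>
      rw [hrec k, norm_smul, norm_inv, norm_norm,
        inv_mul_cancel₀ (norm_ne_zero_iff.mpr (hnz k))]
  intro n
  set v := u n with hv
  set w := A v with hw
  have hwne : w ≠ 0 := hnz n
  have hwpos : (0 : ℝ) < ‖w‖ := norm_pos_iff.mpr hwne
  have key : ⟪A (u (n + 1)), u (n + 1)⟫ = ‖w‖⁻¹ * (‖w‖⁻¹ * ⟪A w, w⟫) := by
    rw [hrec n, map_smul]
    rw [real_inner_smul_left, real_inner_smul_right]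
  rw [key, neg_le_neg_iff]
  set c := ⟪A v, v⟫ with hc
  have hc0 : 0 ≤ c := hpsd v
  have hcw : c ≤ ‖w‖ := by
    calc c ≤ ‖A v‖ * ‖v‖ := real_inner_le_norm _ _
    _ = ‖w‖ := by rw [hnorm n, mul_one]
  have hcs := psd_cauchy_schwarz A hsa hpsd v w
  have hvw : ⟪A v, w⟫ = ‖w‖ ^ 2 := by
    rw [hw]; exact real_inner_self_eq_norm_sq _
  rw [hvw] at hcs
  have hAw : 0 ≤ ⟪A w, w⟫ := hpsd w
  rcases eq_or_lt_of_le hc0 with h0 | hcpos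
  · rw [← h0]
    positivity
  · have heq : ‖w‖⁻¹ * (‖w‖⁻¹ * ⟪A w, w⟫) = ⟪A w, w⟫ / ‖w‖ ^ 2 := by
      rw [pow_two]; field_simp
    rw [← hc] at hcs
    rw [heq, le_div_iff₀ (by positivity)]
    nlinarith [sq_nonneg (‖w‖ - c), mul_pos hwpos hwpos]
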